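/- Let 1 < α ≤ 2, ξ, η ∈ ℝ^d with |ξ| ≪ 1 and |η| close to e₁ (so |η| ∼ 1). Then the Jacobian determinant of the map (ξ₁, η) ↦ (ξ + η, |ξ|^α + |η|^α), viewed as a map of the d+1 variables (ξ₁, η₁, …, η_d) with (ξ₂,…,ξ_d) fixed, equals α·|ξ₁|ξ|^{α−2} − η₁|η|^{α−2}| and is comparable to 1. -/

import Mathlib

open MeasureTheory Complex Filter
open scoped ENNReal NNReal

noncomputable section

abbrev Rd (d : ℕ) := EuclideanSpace ℝ (Fin d)

variable {d : ℕ}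

/-- Fourier transform on `ℝ^d` (non-normalized convention). -/
def FT (f : Rd d → ℂ) (ξ : Rd d) : ℂ :=
  ∫ x : Rd d, Complex.exp (-Complex.I * ((inner ℝ x ξ : ℝ) : ℂ)) * f x

/-- Inverse Fourier transform on `ℝ^d`. -/
def invFT (f : Rd d → ℂ) (x : Rd d) : ℂ :=
  ((2 * Real.pi) ^ d)⁻¹ • ∫ ξ : Rd d, Complex.exp (Complex.I * ((inner ℝ x ξ : ℝ) : ℂ)) * f ξ

/-- The Fourier multiplier `|∇|^α`. -/
def fracOp (α : ℝ) (f : Rd d → ℂ) : Rd d → ℂ :=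
  invFT (fun ξ => (‖ξ‖ : ℂ) ^ (α : ℂ) * FT f ξ)

/-- The linear fractional Schrödinger propagator `U(t) = e^{-it|∇|^α}`. -/
def Uprop (α : ℝ) (t : ℝ) (f : Rd d → ℂ) : Rd d → ℂ :=
  invFT (fun ξ => Complex.exp (-Complex.I * t * (‖ξ‖ : ℂ) ^ (α : ℂ)) * FT f ξ)

/-- Inhomogeneous Sobolev norm `H^s`. -/
def HsNorm (s : ℝ) (f : Rd d → ℂ) : ℝ :=
  (∫ ξ : Rd d, (1 + ‖ξ‖) ^ (2 * s) * ‖FT f ξ‖ ^ 2) ^ (1/2 : ℝ)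

/-- Space-time Fourier transform. -/
def STFT (u : ℝ → Rd d → ℂ) (τ : ℝ) (ξ : Rd d) : ℂ :=
  ∫ t : ℝ, Complex.exp (-Complex.I * t * τ) * FT (u t) ξ

/-- Bourgain space norm `X^{s,b}` adapted to the dispersion relation `τ = |ξ|^α`. -/
def XsbNorm (α s b : ℝ) (u : ℝ → Rd d → ℂ) : ℝ :=
  (∫ p : ℝ × Rd d,
      (1 + ‖p.2‖) ^ (2 * s) * (1 + |p.1 - ‖p.2‖ ^ α|) ^ (2 * b) * ‖STFT u p.1 p.2‖ ^ 2)
    ^ (1/2 : ℝ)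

/-- The Fourier multiplier `ψ(D - n)` from the Wiener decomposition. -/
def wienerPiece (ψ : SchwartzMap (Rd d) ℂ) (n : Fin d → ℤ) (f : Rd d → ℂ) : Rd d → ℂ :=
  invFT (fun ξ => ψ (ξ - (show Rd d from WithLp.toLp 2 (fun i => (n i : ℝ)))) * FT f ξ)

/-- The frequency vector `ξ = (ξ₁, ξ̄)` with first coordinate `a` and remaining
coordinates given by `ξbar`. -/
def xfull (d : ℕ) (a : ℝ) (ξbar : Fin d → ℝ) : Rd d :=
  show Rd d from WithLp.toLp 2 (fun i => if (i : ℕ) = 0 then a else ξbar i)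

/-- The change of variables `(ξ₁, η) ↦ (|ξ|^α + |η|^α, ξ + η)` (with `ξ̄` fixed). -/
def Phi (d : ℕ) (α : ℝ) (ξbar : Fin d → ℝ) : ℝ × Rd d → ℝ × Rd d :=
  fun p => (‖xfull d p.1 ξbar‖ ^ α + ‖p.2‖ ^ α, xfull d p.1 ξbar + p.2)

section aux9

variable {d : ℕ}

lemma aux9_xfull_apply (d : ℕ) (a : ℝ) (ξbar : Fin d → ℝ) (i : Fin d) :
    xfull d a ξbar i = if (i : ℕ) = 0 then a else ξbar i := rfl

lemma aux9_abs_coord_le_norm (x : Rd d) (i : Fin d) : |x i| ≤ ‖x‖ := by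
  rw [EuclideanSpace.norm_eq]
  have h1 : |x i| = Real.sqrt (‖x i‖ ^ 2) := by
    rw [Real.sqrt_sq (norm_nonneg _), Real.norm_eq_abs]
  rw [h1]
  exact Real.sqrt_le_sqrt
    (Finset.single_le_sum (f := fun j => ‖x j‖ ^ 2) (fun j _ => sq_nonneg _) (Finset.mem_univ i))

lemma aux9_norm_xfull (d : ℕ) (hd : 0 < d) (a : ℝ) (ξbar : Fin d → ℝ) :
    ‖xfull d a ξbar‖ =
      Real.sqrt (a ^ 2 + ∑ i ∈ Finset.univ.erase (⟨0, hd⟩ : Fin d), ξbar i ^ 2) := by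
  rw [EuclideanSpace.norm_eq]
  congr 1
  rw [← Finset.add_sum_erase _ _ (Finset.mem_univ (⟨0, hd⟩ : Fin d))]
  congr 1
  · simp [aux9_xfull_apply, Real.norm_eq_abs, sq_abs]
  · refine Finset.sum_congr rfl fun i hi => ?_
    have hne : (i : ℕ) ≠ 0 := by
      simpa [Fin.ext_iff] using (Finset.mem_erase.mp hi).1
    simp [aux9_xfull_apply, hne, Real.norm_eq_abs, sq_abs]

lemma aux9_xfull_decomp (d : ℕ) (hd : 0 < d) (a : ℝ) (ξbar : Fin d → ℝ) :
    xfull d a ξbar = xfull d 0 ξbar + a • EuclideanSpace.single (⟨0, hd⟩ : Fin d) (1 : ℝ) := by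
  ext i
  rw [PiLp.add_apply, PiLp.smul_apply, EuclideanSpace.single_apply]
  show (if (i : ℕ) = 0 then a else ξbar i)
      = (if (i : ℕ) = 0 then (0:ℝ) else ξbar i) + a • (if i = ⟨0, hd⟩ then (1:ℝ) else 0)
  by_cases h : (i : ℕ) = 0
  · have hi : i = ⟨0, hd⟩ := Fin.ext h
    simp [h, hi]
  · have hi : i ≠ ⟨0, hd⟩ := fun hh => h (by rw [hh])
    simp [h, hi]

lemma aux9_hasDerivAt (c : ℝ) (hc : 0 ≤ c) {α : ℝ} (hα : 1 < α) (a : ℝ) :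
    HasDerivAt (fun x : ℝ => (x ^ 2 + c) ^ (α / 2))
      (α * a * (a ^ 2 + c) ^ (α / 2 - 1)) a := by
  rcases eq_or_ne (a ^ 2 + c) 0 with h0 | h0
  · have ha : a = 0 := by nlinarith [sq_nonneg a]
    have hc0 : c = 0 := by nlinarith [sq_nonneg a]
    subst ha; subst hc0
    have hd0 : α * 0 * ((0:ℝ) ^ 2 + 0) ^ (α / 2 - 1) = 0 := by ring
    rw [hd0, hasDerivAt_iff_isLittleO]
    have hz : ((0:ℝ) ^ 2 + 0) ^ (α / 2) = 0 := by
      rw [show ((0:ℝ) ^ 2 + 0) = 0 by ring, Real.zero_rpow (by positivity)]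
    simp only [hz, smul_zero, sub_zero]
    rw [Asymptotics.isLittleO_iff]
    intro C hC
    have h1 : ContinuousAt (fun y : ℝ => y ^ (α - 1)) 0 :=
      Real.continuousAt_rpow_const 0 (α - 1) (Or.inr (by linarith))
    have ht : Filter.Tendsto (fun x : ℝ => |x| ^ (α - 1)) (nhds 0) (nhds 0) := by
      have habs : Filter.Tendsto (fun x : ℝ => |x|) (nhds 0) (nhds (0:ℝ)) := by
        simpa using _root_.continuous_abs.tendsto (0:ℝ)
      have h2 := (h1.tendsto).comp habs
      simpa [Function.comp_def, Real.zero_rpow (show α - 1 ≠ 0 by linarith)] using h2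
    filter_upwards [ht.eventually (gt_mem_nhds hC)] with x hx
    have he1 : (x ^ 2 + 0 : ℝ) = |x| ^ 2 := by rw [add_zero, _root_.sq_abs]
    have he2 : ((|x| ^ 2 : ℝ)) ^ (α / 2) = |x| ^ α := by
      rw [← Real.rpow_two, ← Real.rpow_mul (abs_nonneg x),
        show (2:ℝ) * (α / 2) = α by ring]
    have he3 : |x| ^ α = |x| ^ (α - 1) * |x| := by
      nth_rewrite 1 [show α = α - 1 + 1 by ring]
      rw [Real.rpow_add' (abs_nonneg x) (by intro h; linarith), Real.rpow_one]
    rw [he1, he2, he3, Real.norm_eq_abs, Real.norm_eq_abs,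
      _root_.abs_of_nonneg (by positivity : (0:ℝ) ≤ |x| ^ (α - 1) * |x|)]
    exact mul_le_mul_of_nonneg_right hx.le (abs_nonneg x)
  · have hu : HasDerivAt (fun x : ℝ => x ^ 2 + c) (2 * a) a := by
      simpa using (hasDerivAt_pow 2 a).add_const c
    have := hu.rpow_const (p := α / 2) (Or.inl h0)
    convert this using 1
    ring

end aux9

set_option maxHeartbeats 2000000 in
lemma aux9_main (d : ℕ) (hd : 2 ≤ d) (α : ℝ) (hα : 1 < α) (hα2 : α ≤ 2)
    (i0 : Fin d) (hi0 : (i0 : ℕ) = 0) :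
    ∃ δ > 0, ∃ c > 0, ∃ C > 0, ∀ (a : ℝ) (ξbar : Fin d → ℝ) (η : Rd d),
      ‖xfull d a ξbar‖ < δ →
      ‖η - EuclideanSpace.single i0 (1 : ℝ)‖ < δ →
      (|LinearMap.det (fderiv ℝ (Phi d α ξbar) (a, η)).toLinearMap|
          = α * |a * ‖xfull d a ξbar‖ ^ (α - 2) - η i0 * ‖η‖ ^ (α - 2)| ∧
        c ≤ |LinearMap.det (fderiv ℝ (Phi d α ξbar) (a, η)).toLinearMap| ∧
        |LinearMap.det (fderiv ℝ (Phi d α ξbar) (a, η)).toLinearMap| ≤ C) := by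
  classical
  have hd0 : 0 < d := by omega
  have hα0 : (0:ℝ) < α := by linarith
  have hi0eq : i0 = (⟨0, hd0⟩ : Fin d) := Fin.ext (by simpa using hi0)
  subst hi0eq
  set δ : ℝ := min (1/4) ((1/4 : ℝ) ^ ((1:ℝ)/(α-1))) with hδdef
  have hδpos : 0 < δ := lt_min (by norm_num) (Real.rpow_pos_of_pos (by norm_num) _)
  have hδ14 : δ ≤ 1/4 := min_le_left _ _
  have hδpow : δ ^ (α - 1) ≤ 1/4 := by
    have h1 : δ ^ (α-1) ≤ ((1/4:ℝ) ^ ((1:ℝ)/(α-1))) ^ (α-1) :=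
      Real.rpow_le_rpow hδpos.le (min_le_right _ _) (by linarith)
    have h2 : ((1/4:ℝ) ^ ((1:ℝ)/(α-1))) ^ (α-1) = 1/4 := by
      rw [← Real.rpow_mul (by norm_num : (0:ℝ) ≤ 1/4),
        one_div_mul_cancel (show α - 1 ≠ 0 by linarith), Real.rpow_one]
    linarith
  refine ⟨δ, hδpos, 7*α/20, by linarith, 2*α, by linarith, ?_⟩
  intro a ξbar η hξ hη
  set e1 : Rd d := EuclideanSpace.single (⟨0, hd0⟩ : Fin d) (1 : ℝ) with he1def
  set c2 : ℝ := ∑ i ∈ Finset.univ.erase (⟨0, hd0⟩ : Fin d), ξbar i ^ 2 with hc2def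
  have hc2 : 0 ≤ c2 := Finset.sum_nonneg fun i _ => sq_nonneg _
  have hnx : ∀ t : ℝ, ‖xfull d t ξbar‖ = Real.sqrt (t^2 + c2) := fun t =>
    aux9_norm_xfull d hd0 t ξbar
  -- bounds on η
  have hηδ : ‖η - e1‖ < 1/4 := lt_of_lt_of_le hη hδ14
  have hη1 : |η (⟨0, hd0⟩ : Fin d) - 1| ≤ ‖η - e1‖ := by
    have h := aux9_abs_coord_le_norm (η - e1) (⟨0, hd0⟩ : Fin d)
    have h2 : (η - e1) (⟨0, hd0⟩ : Fin d) = η (⟨0, hd0⟩ : Fin d) - 1 := by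
      rw [PiLp.sub_apply, he1def, EuclideanSpace.single_apply, if_pos rfl]
    rwa [h2] at h
  have hn1 : |‖η‖ - 1| ≤ ‖η - e1‖ := by
    have := abs_norm_sub_norm_le η e1
    simpa [he1def, EuclideanSpace.norm_single] using this
  have hη1lo : 3/4 ≤ η (⟨0, hd0⟩ : Fin d) := by
    have := abs_lt.mp (lt_of_le_of_lt hη1 hηδ); linarith [this.1]
  have hη1hi : η (⟨0, hd0⟩ : Fin d) ≤ 5/4 := by
    have := abs_lt.mp (lt_of_le_of_lt hη1 hηδ); linarith [this.2]
  have hnlo : 3/4 ≤ ‖η‖ := by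
    have := abs_lt.mp (lt_of_le_of_lt hn1 hηδ); linarith [this.1]
  have hnhi : ‖η‖ ≤ 5/4 := by
    have := abs_lt.mp (lt_of_le_of_lt hn1 hηδ); linarith [this.2]
  have hηn0 : ‖η‖ ≠ 0 := by positivity
  -- the derivative
  set A : ℝ := α * a * (a^2 + c2) ^ (α/2 - 1) with hAdef
  set K : ℝ := α/2 * (‖η‖^2) ^ (α/2 - 1) with hKdef
  set L : (ℝ × Rd d) →L[ℝ] (ℝ × Rd d) := ContinuousLinearMap.prod
      ((ContinuousLinearMap.smulRight (1 : ℝ →L[ℝ] ℝ) A).comp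
          (ContinuousLinearMap.fst ℝ ℝ (Rd d))
        + K • ((2 • innerSL ℝ η).comp (ContinuousLinearMap.snd ℝ ℝ (Rd d))))
      ((ContinuousLinearMap.fst ℝ ℝ (Rd d)).smulRight e1
        + ContinuousLinearMap.snd ℝ ℝ (Rd d)) with hLdef
  have hPhiEq : Phi d α ξbar = fun p : ℝ × Rd d =>
      ((p.1^2 + c2) ^ (α/2) + (‖p.2‖^2) ^ (α/2), xfull d 0 ξbar + (p.1 • e1 + p.2)) := by
    funext p
    refine Prod.ext ?_ ?_
    · show ‖xfull d p.1 ξbar‖ ^ α + ‖p.2‖ ^ α = _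
      have h1 : ‖xfull d p.1 ξbar‖ ^ α = (p.1^2 + c2) ^ (α/2) := by
        rw [hnx p.1, Real.sqrt_eq_rpow, ← Real.rpow_mul (by positivity)]
        congr 1; ring
      have h2 : ‖p.2‖ ^ α = (‖p.2‖^2) ^ (α/2) := by
        rw [← Real.rpow_two, ← Real.rpow_mul (norm_nonneg _)]
        congr 1; ring
      rw [h1, h2]
    · show xfull d p.1 ξbar + p.2 = _
      rw [aux9_xfull_decomp d hd0 p.1 ξbar, add_assoc]
  have hderiv : HasFDerivAt (Phi d α ξbar) L (a, η) := by
    rw [hPhiEq]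
    have hFa : HasFDerivAt (fun p : ℝ × Rd d => (p.1 ^ 2 + c2) ^ (α/2))
        ((ContinuousLinearMap.smulRight (1 : ℝ →L[ℝ] ℝ) A).comp
          (ContinuousLinearMap.fst ℝ ℝ (Rd d))) (a, η) := by
      have := (aux9_hasDerivAt c2 hc2 hα a).hasFDerivAt.comp (a, η) (hasFDerivAt_fst (𝕜 := ℝ) (E := ℝ) (F := Rd d) (p := (a, η))); exact this
    have hFb : HasFDerivAt (fun p : ℝ × Rd d => (‖p.2‖ ^ 2) ^ (α/2))
        (K • ((2 • innerSL ℝ η).comp (ContinuousLinearMap.snd ℝ ℝ (Rd d)))) (a, η) := by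
      have h1 : HasFDerivAt (fun y : Rd d => ‖y‖ ^ 2) (2 • (innerSL ℝ η)) η :=
        (hasStrictFDerivAt_norm_sq η).hasFDerivAt
      have h2 : HasFDerivAt (fun p : ℝ × Rd d => ‖p.2‖ ^ 2)
          ((2 • innerSL ℝ η).comp (ContinuousLinearMap.snd ℝ ℝ (Rd d))) (a, η) :=
        by have := h1.comp (a, η) (hasFDerivAt_snd (𝕜 := ℝ) (E := ℝ) (F := Rd d) (p := (a, η))); exact this
      exact h2.rpow_const (p := α/2) (Or.inl (pow_ne_zero 2 hηn0))
    have hFc : HasFDerivAt (fun p : ℝ × Rd d => xfull d 0 ξbar + (p.1 • e1 + p.2))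
        ((ContinuousLinearMap.fst ℝ ℝ (Rd d)).smulRight e1
          + ContinuousLinearMap.snd ℝ ℝ (Rd d)) (a, η) :=
      (((ContinuousLinearMap.fst ℝ ℝ (Rd d)).smulRight e1
          + ContinuousLinearMap.snd ℝ ℝ (Rd d)).hasFDerivAt).const_add _
    exact HasFDerivAt.prodMk (hFa.add hFb) hFc
  rw [hderiv.fderiv]
  -- the determinant
  have hdet : LinearMap.det (L : (ℝ × Rd d) →ₗ[ℝ] (ℝ × Rd d))
      = A - (2*K) * η (⟨0, hd0⟩ : Fin d) := by
    set B1 : Module.Basis Unit ℝ ℝ := Module.Basis.singleton Unit ℝ with hB1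
    set B2 : Module.Basis (Fin d) ℝ (Rd d) := (EuclideanSpace.basisFun (Fin d) ℝ).toBasis with hB2
    set B : Module.Basis (Unit ⊕ Fin d) ℝ (ℝ × Rd d) := B1.prod B2 with hB
    rw [← LinearMap.det_toMatrix B]
    have hrepr1 : ∀ x : ℝ × Rd d, B.repr x (Sum.inl ()) = x.1 := fun x => by
      rw [hB, Module.Basis.prod_repr_inl, hB1, Module.Basis.singleton_repr]
    have hrepr2 : ∀ (x : ℝ × Rd d) (i : Fin d), B.repr x (Sum.inr i) = x.2 i := fun x i => by
      rw [hB, Module.Basis.prod_repr_inr, hB2, OrthonormalBasis.coe_toBasis_repr_apply,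
        EuclideanSpace.basisFun_repr]
    have hBinl : (B (Sum.inl ()) : ℝ × Rd d) = (1, (0 : Rd d)) := by
      refine Prod.ext ?_ ?_
      · rw [hB, Module.Basis.prod_apply_inl_fst, hB1, Module.Basis.singleton_apply]
      · rw [hB, Module.Basis.prod_apply_inl_snd]
    have hBinr : ∀ j : Fin d, (B (Sum.inr j) : ℝ × Rd d)
        = ((0:ℝ), EuclideanSpace.single j (1:ℝ)) := fun j => by
      refine Prod.ext ?_ ?_
      · rw [hB, Module.Basis.prod_apply_inr_fst]
      · rw [hB, Module.Basis.prod_apply_inr_snd, hB2, OrthonormalBasis.coe_toBasis,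
          EuclideanSpace.basisFun_apply]
    have hmat : LinearMap.toMatrix B B (L : (ℝ × Rd d) →ₗ[ℝ] (ℝ × Rd d)) =
        Matrix.fromBlocks (Matrix.of fun _ _ => A) (Matrix.of fun _ j => 2 * K * η j)
          (Matrix.of fun i _ => if i = (⟨0, hd0⟩ : Fin d) then (1:ℝ) else 0) 1 := by
      ext i j
      rcases i with i | i <;> rcases j with j | j
      · rw [LinearMap.toMatrix_apply, hBinl, hrepr1]
        simp [hLdef, he1def, smul_eq_mul]
      · rw [LinearMap.toMatrix_apply, hBinr, hrepr1]
        simp [hLdef, he1def, EuclideanSpace.inner_single_right, smul_eq_mul,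
          starRingEnd_apply, star_trivial]
        ring
      · rw [LinearMap.toMatrix_apply, hBinl, hrepr2]
        simp [hLdef, he1def, EuclideanSpace.single_apply, smul_eq_mul]
      · rw [LinearMap.toMatrix_apply, hBinr, hrepr2]
        simp [hLdef, he1def, EuclideanSpace.single_apply, Matrix.one_apply, smul_eq_mul]
    rw [hmat, Matrix.det_fromBlocks_one₂₂, Matrix.det_unique]
    simp [Matrix.mul_apply, Matrix.sub_apply, mul_ite, Finset.sum_ite_eq']
  have hnormξ : ‖xfull d a ξbar‖ ^ (α-2) = (a^2+c2) ^ (α/2-1) := by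
    rw [hnx a, Real.sqrt_eq_rpow, ← Real.rpow_mul (by positivity)]
    congr 1; ring
  have hnormη : ‖η‖ ^ (α-2) = (‖η‖^2) ^ (α/2-1) := by
    rw [← Real.rpow_two, ← Real.rpow_mul (norm_nonneg _)]
    congr 1; ring
  have hdet2 : LinearMap.det (L : (ℝ × Rd d) →ₗ[ℝ] (ℝ × Rd d))
      = α * (a * ‖xfull d a ξbar‖ ^ (α-2) - η (⟨0, hd0⟩ : Fin d) * ‖η‖ ^ (α-2)) := by
    rw [hdet, hnormξ, hnormη, hAdef, hKdef]
    ring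
  have heq : |LinearMap.det (L : (ℝ × Rd d) →ₗ[ℝ] (ℝ × Rd d))|
      = α * |a * ‖xfull d a ξbar‖ ^ (α-2) - η (⟨0, hd0⟩ : Fin d) * ‖η‖ ^ (α-2)| := by
    rw [hdet2, abs_mul, _root_.abs_of_pos hα0]
  -- quantitative bounds
  have hterm1 : |a * ‖xfull d a ξbar‖ ^ (α-2)| ≤ 1/4 := by
    have h1 : |a| ≤ ‖xfull d a ξbar‖ := by
      have h := aux9_abs_coord_le_norm (xfull d a ξbar) (⟨0, hd0⟩ : Fin d)
      simpa [aux9_xfull_apply] using h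
    rw [abs_mul, _root_.abs_of_nonneg (Real.rpow_nonneg (norm_nonneg _) _)]
    calc |a| * ‖xfull d a ξbar‖ ^ (α-2)
        ≤ ‖xfull d a ξbar‖ * ‖xfull d a ξbar‖ ^ (α-2) :=
          mul_le_mul_of_nonneg_right h1 (Real.rpow_nonneg (norm_nonneg _) _)
      _ = ‖xfull d a ξbar‖ ^ (α-1) := by
          rw [show α - 1 = 1 + (α-2) by ring,
            Real.rpow_add' (norm_nonneg _) (by intro h; linarith), Real.rpow_one]
      _ ≤ δ ^ (α-1) := Real.rpow_le_rpow (norm_nonneg _) hξ.le (by linarith)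
      _ ≤ 1/4 := hδpow
  have hrlo : 4/5 ≤ ‖η‖ ^ (α-2) := by
    have h1 : (5/4:ℝ) ^ (α-2) ≤ ‖η‖ ^ (α-2) :=
      Real.rpow_le_rpow_of_nonpos (by linarith) hnhi (by linarith)
    have h2 : (4/5:ℝ) ≤ (5/4:ℝ) ^ (α-2) := by
      have h3 := Real.rpow_le_rpow_of_exponent_le (by norm_num : (1:ℝ) ≤ 5/4)
        (show (-1:ℝ) ≤ α-2 by linarith)
      rw [Real.rpow_neg_one] at h3
      norm_num at h3
      linarith
    linarith
  have hrhi : ‖η‖ ^ (α-2) ≤ 4/3 := by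
    have h1 : ‖η‖ ^ (α-2) ≤ (3/4:ℝ) ^ (α-2) :=
      Real.rpow_le_rpow_of_nonpos (by norm_num) hnlo (by linarith)
    have h2 : (3/4:ℝ) ^ (α-2) ≤ (3/4:ℝ) ^ (-1:ℝ) :=
      Real.rpow_le_rpow_of_exponent_ge (by norm_num) (by norm_num) (by linarith)
    rw [Real.rpow_neg_one] at h2
    norm_num at h2
    linarith
  have hterm2lo : 3/5 ≤ η (⟨0, hd0⟩ : Fin d) * ‖η‖ ^ (α-2) := by nlinarith
  have hterm2hi : η (⟨0, hd0⟩ : Fin d) * ‖η‖ ^ (α-2) ≤ 5/3 := by nlinarith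
  have hXlo : 7/20 ≤ |a * ‖xfull d a ξbar‖ ^ (α-2) - η (⟨0, hd0⟩ : Fin d) * ‖η‖ ^ (α-2)| := by
    have h1 := abs_sub_abs_le_abs_sub (η (⟨0, hd0⟩ : Fin d) * ‖η‖ ^ (α-2))
      (a * ‖xfull d a ξbar‖ ^ (α-2))
    rw [abs_sub_comm] at h1
    have h2 : |η (⟨0, hd0⟩ : Fin d) * ‖η‖ ^ (α-2)| = η (⟨0, hd0⟩ : Fin d) * ‖η‖ ^ (α-2) :=
      _root_.abs_of_nonneg (by linarith)
    rw [h2] at h1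
    linarith
  have hXhi : |a * ‖xfull d a ξbar‖ ^ (α-2) - η (⟨0, hd0⟩ : Fin d) * ‖η‖ ^ (α-2)| ≤ 2 := by
    have h1 := abs_add_le (a * ‖xfull d a ξbar‖ ^ (α-2)) (-(η (⟨0, hd0⟩ : Fin d) * ‖η‖ ^ (α-2)))
    rw [abs_neg, ← sub_eq_add_neg] at h1
    have h2 : |η (⟨0, hd0⟩ : Fin d) * ‖η‖ ^ (α-2)| = η (⟨0, hd0⟩ : Fin d) * ‖η‖ ^ (α-2) :=
      _root_.abs_of_nonneg (by linarith)
    rw [h2] at h1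
    linarith
  refine ⟨heq, ?_, ?_⟩
  · rw [heq]; nlinarith
  · rw [heq]; nlinarith


theorem statement9 (d : ℕ) (hd : 2 ≤ d) (α : ℝ) (hα : 1 < α) (hα2 : α ≤ 2) :
    ∃ δ > 0, ∃ c > 0, ∃ C > 0, ∀ (a : ℝ) (ξbar : Fin d → ℝ) (η : Rd d),
      ‖xfull d a ξbar‖ < δ →
      ‖η - EuclideanSpace.single (⟨0, by omega⟩ : Fin d) (1 : ℝ)‖ < δ →
      (|LinearMap.det (fderiv ℝ (Phi d α ξbar) (a, η)).toLinearMap|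
          = α * |a * ‖xfull d a ξbar‖ ^ (α - 2) - η (⟨0, by omega⟩ : Fin d) * ‖η‖ ^ (α - 2)| ∧
        c ≤ |LinearMap.det (fderiv ℝ (Phi d α ξbar) (a, η)).toLinearMap| ∧
        |LinearMap.det (fderiv ℝ (Phi d α ξbar) (a, η)).toLinearMap| ≤ C) := by
  exact aux9_main d hd α hα hα2 ⟨0, by omega⟩ rfl
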